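/- Let G be an n×m matrix whose entries are proper rational functions over ℂ, let s_p = σ_p + iω_p be a pole of G, and let r > 0 be such that s_p is the only pole of G whose real part lies in the interval [σ_p − r, σ_p + r]. Then for every ε with 0 < ε < r there exists δ with 0 < δ ≤ ε such that for every Δ ∈ ℝ with 0 < |Δ − σ_p| < δ: sup { σ̄(G(Δ + iω)) : ω ∈ ℝ, |Δ + iω − s_p| < ε } > sup { σ̄(G(Δ + iω)) : ω ∈ ℝ, |Δ + iω − s_p| ≥ ε }. That is, when the vertical line γ_Δ(ω) = Δ + iω is sufficiently close to the pole s_p, the supremum of the largest singular value along the line is attained in the ε-neighborhood of s_p. -/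

import Mathlib

open Polynomial Filter Topology Matrix

/-- The largest singular value `σ̄(M)` of a complex `n × m` matrix, i.e. its operator norm
as a linear map `(ℂ^m, ‖·‖₂) → (ℂ^n, ‖·‖₂)`. -/
noncomputable def sigmaMax {n m : ℕ} (M : Matrix (Fin n) (Fin m) ℂ) : ℝ :=
  ‖LinearMap.toContinuousLinearMap (Matrix.toEuclideanLin M)‖

/-- Entrywise evaluation of a matrix of rational functions at a point `s : ℂ`. -/
noncomputable def evalMat {n m : ℕ} (G : Matrix (Fin n) (Fin m) (RatFunc ℂ)) (s : ℂ) :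
    Matrix (Fin n) (Fin m) ℂ :=
  fun i j => (G i j).eval (RingHom.id ℂ) s

/-- `s` is a pole of the rational matrix `G` if the denominator (in coprime
numerator/denominator form) of at least one entry vanishes at `s` (Definition 1). -/
def IsPole {n m : ℕ} (G : Matrix (Fin n) (Fin m) (RatFunc ℂ)) (s : ℂ) : Prop :=
  ∃ i j, (G i j).denom.eval s = 0

/-! ### Auxiliary lemmas -/

lemma evalMat_apply {n m : ℕ} (G : Matrix (Fin n) (Fin m) (RatFunc ℂ)) (s : ℂ)
    (i : Fin n) (j : Fin m) :
    evalMat G s i j = (G i j).num.eval s / (G i j).denom.eval s := rfl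

lemma coord_le_norm {k : ℕ} (y : EuclideanSpace ℂ (Fin k)) (i : Fin k) : ‖y i‖ ≤ ‖y‖ := by
  rw [EuclideanSpace.norm_eq]
  calc ‖y i‖ = Real.sqrt (‖y i‖ ^ 2) := (Real.sqrt_sq (norm_nonneg _)).symm
    _ ≤ _ := Real.sqrt_le_sqrt (Finset.single_le_sum
        (f := fun i => ‖y i‖ ^ 2) (fun i _ => sq_nonneg _) (Finset.mem_univ i))

lemma euclid_norm_le_sum {k : ℕ} (y : EuclideanSpace ℂ (Fin k)) : ‖y‖ ≤ ∑ i, ‖y i‖ := by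
  rw [EuclideanSpace.norm_eq]
  calc Real.sqrt (∑ i, ‖y i‖ ^ 2) ≤ Real.sqrt ((∑ i, ‖y i‖) ^ 2) :=
        Real.sqrt_le_sqrt (Finset.sum_sq_le_sq_sum_of_nonneg (fun i _ => norm_nonneg _))
    _ = ∑ i, ‖y i‖ := Real.sqrt_sq (Finset.sum_nonneg fun _ _ => norm_nonneg _)

lemma abs_entry_le_sigmaMax {n m : ℕ} (M : Matrix (Fin n) (Fin m) ℂ) (i : Fin n) (j : Fin m) :
    ‖M i j‖ ≤ sigmaMax M := by
  have h := (LinearMap.toContinuousLinearMap (Matrix.toEuclideanLin M)).le_opNorm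
    (EuclideanSpace.single j (1 : ℂ))
  rw [EuclideanSpace.norm_single, norm_one, mul_one] at h
  have hcoord : (Matrix.toEuclideanLin M (EuclideanSpace.single j (1 : ℂ))) i = M i j := by
    simp [Matrix.toEuclideanLin_apply, Matrix.mulVec,
      dotProduct, EuclideanSpace.single_apply]
  calc ‖M i j‖ = ‖(Matrix.toEuclideanLin M (EuclideanSpace.single j (1:ℂ))) i‖ := by
        rw [hcoord]
    _ ≤ ‖Matrix.toEuclideanLin M (EuclideanSpace.single j (1:ℂ))‖ := coord_le_norm _ _
    _ ≤ _ := h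

lemma sigmaMax_le_of_entries {n m : ℕ} (M : Matrix (Fin n) (Fin m) ℂ) {B : ℝ} (hB : 0 ≤ B)
    (h : ∀ i j, ‖M i j‖ ≤ B) : sigmaMax M ≤ (n * m : ℝ) * B := by
  apply ContinuousLinearMap.opNorm_le_bound _ (by positivity)
  intro x
  have hx : ∀ j, ‖x j‖ ≤ ‖x‖ := fun j => coord_le_norm x j
  have key : ∀ i : Fin n, ‖(Matrix.toEuclideanLin M x) i‖ ≤ (m : ℝ) * B * ‖x‖ := by
    intro i
    have : (Matrix.toEuclideanLin M x) i = ∑ j, M i j * x j := by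
      simp [Matrix.toEuclideanLin_apply, Matrix.mulVec, dotProduct]
    rw [this]
    calc ‖∑ j, M i j * x j‖ ≤ ∑ j, ‖M i j * x j‖ := norm_sum_le _ _
      _ ≤ ∑ _j : Fin m, B * ‖x‖ := by
          refine Finset.sum_le_sum fun j _ => ?_
          rw [norm_mul]
          exact mul_le_mul (h i j) (hx j) (norm_nonneg _) hB
      _ = (m : ℝ) * B * ‖x‖ := by simp [Finset.sum_const]; ring
  calc ‖LinearMap.toContinuousLinearMap (Matrix.toEuclideanLin M) x‖
      = ‖Matrix.toEuclideanLin M x‖ := rfl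
    _ ≤ ∑ _i : Fin n, (m : ℝ) * B * ‖x‖ :=
        le_trans (euclid_norm_le_sum _) (Finset.sum_le_sum fun i _ => key i)
    _ = (n * m : ℝ) * B * ‖x‖ := by simp [Finset.sum_const]; ring

lemma continuous_sigmaMax {n m : ℕ} :
    Continuous fun M : Matrix (Fin n) (Fin m) ℂ => sigmaMax M := by
  have : Continuous fun M : Matrix (Fin n) (Fin m) ℂ =>
      LinearMap.toContinuousLinearMap (Matrix.toEuclideanLin M) :=
    LinearMap.continuous_of_finiteDimensional
      ((LinearMap.toContinuousLinearMap :
          (EuclideanSpace ℂ (Fin m) →ₗ[ℂ] EuclideanSpace ℂ (Fin n)) ≃ₗ[ℂ] _).toLinearMap.comp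
        (Matrix.toEuclideanLin : Matrix (Fin n) (Fin m) ℂ ≃ₗ[ℂ] _).toLinearMap)
  exact continuous_norm.comp this

lemma poly_abs_le (p : ℂ[X]) {s : ℂ} (hs : 1 ≤ ‖s‖) :
    ‖p.eval s‖ ≤
      (∑ i ∈ Finset.range (p.natDegree + 1), ‖p.coeff i‖) *
        ‖s‖ ^ p.natDegree := by
  rw [Polynomial.eval_eq_sum_range, Finset.sum_mul]
  refine le_trans (norm_sum_le _ _) (Finset.sum_le_sum fun i hi => ?_)
  rw [norm_mul, norm_pow]
  have hi' : i ≤ p.natDegree := Nat.lt_succ_iff.mp (Finset.mem_range.mp hi)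
  exact mul_le_mul_of_nonneg_left (pow_le_pow_right₀ hs hi') (norm_nonneg _)

lemma poly_abs_lower (q : ℂ[X]) (hq : q ≠ 0) :
    ∃ R : ℝ, 1 ≤ R ∧ ∀ s : ℂ, R ≤ ‖s‖ →
      ‖q.leadingCoeff‖ / 2 * ‖s‖ ^ q.natDegree ≤ ‖q.eval s‖ := by
  have hlc : 0 < ‖q.leadingCoeff‖ :=
    norm_pos_iff.mpr (Polynomial.leadingCoeff_ne_zero.mpr hq)
  set lc := ‖q.leadingCoeff‖ with hlcdef
  by_cases hd : q.natDegree = 0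
  · obtain ⟨a, rfl⟩ := Polynomial.natDegree_eq_zero.mp hd
    refine ⟨1, le_rfl, fun s _ => ?_⟩
    simp only [Polynomial.eval_C, Polynomial.natDegree_C, pow_zero, mul_one]
    simp only [Polynomial.leadingCoeff_C] at hlcdef
    rw [hlcdef]
    linarith [norm_nonneg a]
  · set e := q.eraseLead with he
    set A := ∑ i ∈ Finset.range (e.natDegree + 1), ‖e.coeff i‖ with hA
    have hA0 : 0 ≤ A := Finset.sum_nonneg fun _ _ => norm_nonneg _
    refine ⟨max 1 (2 * A / lc + 1), le_max_left _ _, fun s hs => ?_⟩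
    have hs1 : 1 ≤ ‖s‖ := le_trans (le_max_left _ _) hs
    have hs2 : 2 * A / lc + 1 ≤ ‖s‖ := le_trans (le_max_right _ _) hs
    have heval : e.eval s + q.leadingCoeff * s ^ q.natDegree = q.eval s := by
      have h := congrArg (Polynomial.eval s) (Polynomial.eraseLead_add_C_mul_X_pow q)
      simp only [Polynomial.eval_add, Polynomial.eval_mul, Polynomial.eval_C,
        Polynomial.eval_pow, Polynomial.eval_X] at h
      exact h
    have hup : ‖e.eval s‖ ≤ A * ‖s‖ ^ e.natDegree := poly_abs_le e hs1
    have hdeg : e.natDegree ≤ q.natDegree - 1 := Polynomial.eraseLead_natDegree_le q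
    have hpow : ‖s‖ ^ e.natDegree ≤ ‖s‖ ^ (q.natDegree - 1) :=
      pow_le_pow_right₀ hs1 hdeg
    have hsplit : ‖s‖ ^ q.natDegree =
        ‖s‖ * ‖s‖ ^ (q.natDegree - 1) := by
      rw [← pow_succ']
      congr 1
      omega
    have hineq : lc * ‖s‖ ^ q.natDegree ≤
        ‖q.eval s‖ + ‖e.eval s‖ := by
      have h0 : lc * ‖s‖ ^ q.natDegree =
          ‖q.leadingCoeff * s ^ q.natDegree‖ := by
        rw [norm_mul, norm_pow]
      rw [h0]
      calc ‖q.leadingCoeff * s ^ q.natDegree‖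
          = ‖q.eval s - e.eval s‖ := by rw [← heval]; ring_nf
        _ ≤ ‖q.eval s‖ + ‖e.eval s‖ := by
            simpa using norm_sub_le (q.eval s) (e.eval s)
    have hApos : A * ‖s‖ ^ (q.natDegree - 1) ≤
        lc / 2 * ‖s‖ ^ q.natDegree := by
      rw [hsplit, ← mul_assoc]
      have h1 : 0 ≤ ‖s‖ ^ (q.natDegree - 1) := by positivity
      have h2 : A ≤ lc / 2 * ‖s‖ := by
        have h3 : 2 * A / lc ≤ ‖s‖ - 1 := by linarith
        have h4 := (div_le_iff₀ hlc).mp h3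
        nlinarith
      exact mul_le_mul_of_nonneg_right h2 h1
    have hfin : ‖e.eval s‖ ≤ lc / 2 * ‖s‖ ^ q.natDegree :=
      le_trans hup (le_trans (mul_le_mul_of_nonneg_left hpow hA0) hApos)
    nlinarith [hineq, hfin]

lemma ratfunc_tail (p q : ℂ[X]) (hdeg : p.degree ≤ q.degree) (hq : q ≠ 0) :
    ∃ C R : ℝ, 0 ≤ C ∧ 1 ≤ R ∧ ∀ s : ℂ, R ≤ ‖s‖ →
      ‖p.eval s / q.eval s‖ ≤ C := by
  obtain ⟨R, hR1, hRlow⟩ := poly_abs_lower q hq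
  have hlc : 0 < ‖q.leadingCoeff‖ :=
    norm_pos_iff.mpr (Polynomial.leadingCoeff_ne_zero.mpr hq)
  set lc := ‖q.leadingCoeff‖
  set A := ∑ i ∈ Finset.range (p.natDegree + 1), ‖p.coeff i‖ with hA
  have hA0 : 0 ≤ A := Finset.sum_nonneg fun _ _ => norm_nonneg _
  refine ⟨A / (lc / 2), R, div_nonneg hA0 (le_of_lt (half_pos hlc)), hR1, fun s hs => ?_⟩
  have hs1 : 1 ≤ ‖s‖ := le_trans hR1 hs
  have hs0 : 0 < ‖s‖ := lt_of_lt_of_le one_pos hs1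
  have hup : ‖p.eval s‖ ≤ A * ‖s‖ ^ p.natDegree := poly_abs_le p hs1
  have hnd : p.natDegree ≤ q.natDegree := Polynomial.natDegree_le_natDegree hdeg
  have hup2 : ‖p.eval s‖ ≤ A * ‖s‖ ^ q.natDegree :=
    le_trans hup (mul_le_mul_of_nonneg_left (pow_le_pow_right₀ hs1 hnd) hA0)
  have hlow := hRlow s hs
  have hpos : 0 < lc / 2 * ‖s‖ ^ q.natDegree :=
    mul_pos (half_pos hlc) (pow_pos hs0 _)
  rw [norm_div]
  calc ‖p.eval s‖ / ‖q.eval s‖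
      ≤ (A * ‖s‖ ^ q.natDegree) / (lc / 2 * ‖s‖ ^ q.natDegree) :=
        div_le_div₀ (mul_nonneg hA0 (le_of_lt (pow_pos hs0 _))) hup2 hpos hlow
    _ = A / (lc / 2) := by
        have hT : (‖s‖ ^ q.natDegree) ≠ 0 := ne_of_gt (pow_pos hs0 _)
        rw [mul_comm (lc / 2) (‖s‖ ^ q.natDegree),
          mul_comm A (‖s‖ ^ q.natDegree), mul_div_mul_left _ _ hT]

/-- **Corollary 1 of the paper.** Let `G` have proper rational entries,
let `s_p = σ_p + iω_p` be a pole of `G`, and let `r > 0` be such that `s_p` is the only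
pole of `G` with real part in `[σ_p - r, σ_p + r]`. Then for every `0 < ε < r` there is
`0 < δ ≤ ε` such that for every `Δ` with `0 < |Δ - σ_p| < δ`, the supremum of
`σ̄(G(Δ + iω))` over the part of the vertical line inside the `ε`-neighborhood of `s_p`
exceeds its supremum over the part outside that neighborhood: the maximum of the largest
singular value along the line `γ_Δ` is attained near `s_p`. -/
theorem sup_sigmaMax_attained_near_pole {n m : ℕ}
    (G : Matrix (Fin n) (Fin m) (RatFunc ℂ))
    (hproper : ∀ i j, (G i j).num.degree ≤ (G i j).denom.degree)
    (σ_p ω_p : ℝ) (s_p : ℂ) (hs : s_p = (σ_p : ℂ) + ω_p * Complex.I)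
    (hpole : IsPole G s_p) (r : ℝ) (hr : 0 < r)
    (honly : ∀ s : ℂ, IsPole G s → s.re ∈ Set.Icc (σ_p - r) (σ_p + r) → s = s_p) :
    ∀ ε : ℝ, 0 < ε → ε < r → ∃ δ : ℝ, 0 < δ ∧ δ ≤ ε ∧
      ∀ Δ : ℝ, 0 < |Δ - σ_p| → |Δ - σ_p| < δ →
        sSup ((fun ω : ℝ => sigmaMax (evalMat G ((Δ : ℂ) + ω * Complex.I))) ''
            {ω : ℝ | ‖(Δ : ℂ) + ω * Complex.I - s_p‖ < ε}) >
        sSup ((fun ω : ℝ => sigmaMax (evalMat G ((Δ : ℂ) + ω * Complex.I))) ''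
            {ω : ℝ | ε ≤ ‖(Δ : ℂ) + ω * Complex.I - s_p‖}) := by
  intro ε hε hεr
  -- denominators do not vanish in the strip away from `s_p`
  have hdenom_ne : ∀ (i : Fin n) (j : Fin m) (s : ℂ), |s.re - σ_p| ≤ ε → s ≠ s_p →
      (G i j).denom.eval s ≠ 0 := by
    intro i j s hre hne hzero
    apply hne
    refine honly s ⟨i, j, hzero⟩ ?_
    have h := abs_le.mp hre
    exact ⟨by linarith [h.1], by linarith [h.2]⟩
  set S : Set ℂ := {s : ℂ | |s.re - σ_p| ≤ ε ∧ ε ≤ ‖s - s_p‖} with hSdef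
  have hS_ne : ∀ s ∈ S, s ≠ s_p := by
    intro s hsS h
    have h2 := hsS.2
    rw [h] at h2
    simp at h2
    linarith
  -- each entry is bounded on the strip `S`
  have hBij : ∀ (i : Fin n) (j : Fin m), ∃ B : ℝ,
      ∀ s ∈ S, ‖evalMat G s i j‖ ≤ B := by
    intro i j
    obtain ⟨C, R, hC0, hR1, htail⟩ := ratfunc_tail (G i j).num (G i j).denom (hproper i j)
      (RatFunc.denom_ne_zero _)
    have hScl : IsClosed S := by
      rw [hSdef, Set.setOf_and]
      exact (isClosed_le (continuous_abs.comp (Complex.continuous_re.sub continuous_const))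
          continuous_const).inter
        (isClosed_le continuous_const (continuous_norm.comp
          (continuous_id.sub continuous_const)))
    have hK : IsCompact (S ∩ Metric.closedBall 0 R) :=
      (isCompact_closedBall (0 : ℂ) R).inter_left hScl
    have hcont : ContinuousOn (fun s : ℂ => ‖evalMat G s i j‖) S := by
      have hden : ∀ s ∈ S, (G i j).denom.eval s ≠ 0 :=
        fun s hsS => hdenom_ne i j s hsS.1 (hS_ne s hsS)
      have hdiv : ContinuousOn (fun s : ℂ => (G i j).num.eval s / (G i j).denom.eval s) S :=
        ContinuousOn.div (Polynomial.continuous _).continuousOn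
          (Polynomial.continuous _).continuousOn hden
      simpa only [evalMat_apply] using hdiv.norm
    obtain ⟨B1, hB1⟩ := (hK.image_of_continuousOn (hcont.mono Set.inter_subset_left)).bddAbove
    refine ⟨max B1 C, fun s hsS => ?_⟩
    by_cases hcase : ‖s‖ ≤ R
    · refine le_max_of_le_left (hB1 ?_)
      refine Set.mem_image_of_mem _ ⟨hsS, ?_⟩
      simpa [Metric.mem_closedBall, Complex.dist_eq] using hcase
    · rw [evalMat_apply]
      exact le_max_of_le_right (htail s (le_of_not_ge hcase))
  choose b hb using hBij
  set B : ℝ := ∑ ij : Fin n × Fin m, max 0 (b ij.1 ij.2) with hBdef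
  have hB0 : 0 ≤ B := Finset.sum_nonneg fun _ _ => le_max_left _ _
  have hbB : ∀ i j, b i j ≤ B := fun i j =>
    le_trans (le_max_right _ _)
      (Finset.single_le_sum (f := fun ij : Fin n × Fin m => max 0 (b ij.1 ij.2))
        (fun _ _ => le_max_left _ _) (Finset.mem_univ (i, j)))
  set M : ℝ := (n * m : ℝ) * B with hMdef
  have hM0 : 0 ≤ M := mul_nonneg (by positivity) hB0
  have hMbound : ∀ s ∈ S, sigmaMax (evalMat G s) ≤ M := fun s hsS =>
    sigmaMax_le_of_entries _ hB0 fun i j => le_trans (hb i j s hsS) (hbB i j)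
  -- the pole entry
  obtain ⟨i0, j0, hz⟩ := hpole
  have hnum0 : (G i0 j0).num.eval s_p ≠ 0 := by
    obtain ⟨a, b', hab⟩ := RatFunc.isCoprime_num_denom (G i0 j0)
    intro h
    have h1 := congrArg (Polynomial.eval s_p) hab
    simp only [Polynomial.eval_add, Polynomial.eval_mul, Polynomial.eval_one, h, hz,
      mul_zero, add_zero] at h1
    exact one_ne_zero h1.symm
  have hc0 : 0 < ‖(G i0 j0).num.eval s_p‖ := norm_pos_iff.mpr hnum0
  set c : ℝ := ‖(G i0 j0).num.eval s_p‖ with hcdef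
  -- continuity along the horizontal segment through the pole
  have hφ : Continuous fun Δ : ℝ => ((Δ : ℂ) + ω_p * Complex.I) :=
    (Complex.continuous_ofReal).add continuous_const
  have hsval : ((σ_p : ℂ) + ω_p * Complex.I) = s_p := hs.symm
  have hnum_t : Tendsto (fun Δ : ℝ =>
      ‖(G i0 j0).num.eval ((Δ : ℂ) + ω_p * Complex.I)‖) (𝓝 σ_p) (𝓝 c) := by
    have h := (continuous_norm.comp
      ((Polynomial.continuous (G i0 j0).num).comp hφ)).tendsto σ_p
    simpa [Function.comp_def, hsval] using h
  have hden_t : Tendsto (fun Δ : ℝ =>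
      ‖(G i0 j0).denom.eval ((Δ : ℂ) + ω_p * Complex.I)‖) (𝓝 σ_p) (𝓝 0) := by
    have h := (continuous_norm.comp
      ((Polynomial.continuous (G i0 j0).denom).comp hφ)).tendsto σ_p
    simpa [Function.comp_def, hsval, hz] using h
  have h2M : (0 : ℝ) < 2 * (M + 1) := by linarith
  have hev : ∀ᶠ Δ : ℝ in 𝓝 σ_p,
      c / 2 < ‖(G i0 j0).num.eval ((Δ : ℂ) + ω_p * Complex.I)‖ ∧
      ‖(G i0 j0).denom.eval ((Δ : ℂ) + ω_p * Complex.I)‖ < c / (2 * (M + 1)) :=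
    (hnum_t.eventually (eventually_gt_nhds (by linarith))).and
      (hden_t.eventually (eventually_lt_nhds (div_pos hc0 h2M)))
  obtain ⟨δ₁, hδ₁, hball⟩ := Metric.eventually_nhds_iff.mp hev
  refine ⟨min δ₁ ε, lt_min hδ₁ hε, min_le_right _ _, ?_⟩
  intro Δ hΔ0 hΔδ
  have hΔε : |Δ - σ_p| < ε := lt_of_lt_of_le hΔδ (min_le_right _ _)
  have hΔδ₁ : |Δ - σ_p| < δ₁ := lt_of_lt_of_le hΔδ (min_le_left _ _)
  have hΔne : Δ ≠ σ_p := by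
    intro h
    rw [h] at hΔ0
    simp at hΔ0
  have hdiff : ∀ ω : ℝ, ((Δ : ℂ) + ω * Complex.I - s_p) =
      ((Δ - σ_p : ℝ) : ℂ) + ((ω - ω_p : ℝ) : ℂ) * Complex.I := by
    intro ω; rw [hs]; push_cast; ring
  have himabs : ∀ ω : ℝ, |ω - ω_p| ≤ ‖(Δ : ℂ) + ω * Complex.I - s_p‖ := by
    intro ω
    rw [hdiff ω]
    have h := Complex.abs_im_le_norm (((Δ - σ_p : ℝ) : ℂ) + ((ω - ω_p : ℝ) : ℂ) * Complex.I)
    simpa using h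
  have hreabs : ∀ ω : ℝ, ((Δ : ℂ) + ω * Complex.I).re = Δ := by intro ω; simp
  have hlinene : ∀ ω : ℝ, ((Δ : ℂ) + ω * Complex.I) ≠ s_p := by
    intro ω h
    apply hΔne
    have h2 := congrArg Complex.re h
    rw [hreabs ω, hs] at h2
    simpa using h2
  have habsΔ : ‖(Δ : ℂ) + ω_p * Complex.I - s_p‖ = |Δ - σ_p| := by
    have h0 : ((Δ - σ_p : ℝ) : ℂ) + ((ω_p - ω_p : ℝ) : ℂ) * Complex.I = ((Δ - σ_p : ℝ) : ℂ) := by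
      norm_num
    rw [hdiff ω_p, h0, Complex.norm_real, Real.norm_eq_abs]
  set f : ℝ → ℝ := fun ω => sigmaMax (evalMat G ((Δ : ℂ) + ω * Complex.I)) with hfdef
  have hfc : Continuous f := by
    apply continuous_sigmaMax.comp
    apply continuous_matrix
    intro i j
    simp only [evalMat_apply]
    refine Continuous.div ?_ ?_ ?_
    · exact (Polynomial.continuous _).comp (continuous_const.add
        ((Complex.continuous_ofReal).mul continuous_const))
    · exact (Polynomial.continuous _).comp (continuous_const.add
        ((Complex.continuous_ofReal).mul continuous_const))
    · intro ω
      exact hdenom_ne i j _ (by rw [hreabs ω]; exact le_of_lt hΔε) (hlinene ω)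
  have hmemU : ‖(Δ : ℂ) + ω_p * Complex.I - s_p‖ < ε := by
    rw [habsΔ]; exact hΔε
  have hdne : (G i0 j0).denom.eval ((Δ : ℂ) + ω_p * Complex.I) ≠ 0 :=
    hdenom_ne i0 j0 _ (by rw [hreabs ω_p]; exact le_of_lt hΔε) (hlinene ω_p)
  have hd0 : 0 < ‖(G i0 j0).denom.eval ((Δ : ℂ) + ω_p * Complex.I)‖ :=
    norm_pos_iff.mpr hdne
  obtain ⟨h1, h2⟩ := hball (show dist Δ σ_p < δ₁ by rwa [Real.dist_eq])
  have h3 : ‖(G i0 j0).denom.eval ((Δ : ℂ) + ω_p * Complex.I)‖ * (2 * (M + 1)) < c :=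
    (lt_div_iff₀ h2M).mp h2
  have hvM : M < f ω_p := by
    have hentry : ‖evalMat G ((Δ : ℂ) + ω_p * Complex.I) i0 j0‖ =
        ‖(G i0 j0).num.eval ((Δ : ℂ) + ω_p * Complex.I)‖ /
          ‖(G i0 j0).denom.eval ((Δ : ℂ) + ω_p * Complex.I)‖ := by
      rw [evalMat_apply, norm_div]
    have hineq : M < ‖evalMat G ((Δ : ℂ) + ω_p * Complex.I) i0 j0‖ := by
      rw [hentry, lt_div_iff₀ hd0]
      nlinarith [hd0, hM0, h1, h3]
    exact lt_of_lt_of_le hineq (abs_entry_le_sigmaMax _ i0 j0)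
  have hout : sSup (f '' {ω : ℝ | ε ≤ ‖(Δ : ℂ) + ω * Complex.I - s_p‖}) ≤ M := by
    apply Real.sSup_le _ hM0
    rintro x ⟨ω, hω, rfl⟩
    exact hMbound _ ⟨by rw [hreabs ω]; exact le_of_lt hΔε, hω⟩
  have hbddU : BddAbove (f '' {ω : ℝ | ‖(Δ : ℂ) + ω * Complex.I - s_p‖ < ε}) := by
    refine BddAbove.mono (Set.image_mono ?_)
      ((isCompact_Icc (a := ω_p - ε) (b := ω_p + ε)).bddAbove_image hfc.continuousOn)
    intro ω hω
    have h4 : |ω - ω_p| < ε := lt_of_le_of_lt (himabs ω) hω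
    have h5 := abs_le.mp (le_of_lt h4)
    exact ⟨by linarith [h5.1], by linarith [h5.2]⟩
  have hin : f ω_p ≤ sSup (f '' {ω : ℝ | ‖(Δ : ℂ) + ω * Complex.I - s_p‖ < ε}) :=
    le_csSup hbddU ⟨ω_p, hmemU, rfl⟩
  exact lt_of_le_of_lt hout (lt_of_lt_of_le hvM hin)
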